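/- For every n ≥ 2, the group Aut A_n of K-algebra automorphisms of the free associative algebra A_n = K⟨x_1,…,x_n⟩ over a field K of characteristic zero is not linear: for every field F and every natural number m there is no injective group homomorphism from Aut A_n into GL_m(F). -/

import Mathlib

noncomputable section
open Polynomial



namespace NotLinearAux

variable {K : Type} [Field K]

/-- Shift of a polynomial: `p(X + c)`. -/
def sh (c : K) (p : K[X]) : K[X] := p.comp (X + C c)

lemma sh_add (c : K) (p q : K[X]) : sh c (p + q) = sh c p + sh c q := add_comp
lemma sh_sub (c : K) (p q : K[X]) : sh c (p - q) = sh c p - sh c q := sub_comp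
lemma sh_zero (c : K) : sh c 0 = 0 := zero_comp
lemma sh_mul (c : K) (p q : K[X]) : sh c (p * q) = sh c p * sh c q := by unfold sh; exact mul_comp _ _ _
lemma sh_C (c a : K) : sh c (C a) = C a := C_comp
lemma sh_natCast (c : K) (k : ℕ) : sh c (k : K[X]) = (k : K[X]) := natCast_comp
lemma sh_X (c : K) : sh c X = X + C c := X_comp
lemma sh_one (c : K) : sh c 1 = 1 := one_comp

lemma sh_sh (c c' : K) (p : K[X]) : sh c (sh c' p) = sh (c + c') p := by
  unfold sh
  rw [comp_assoc]
  congr 1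
  simp [add_comp]
  ring

lemma sh_zero_apply (p : K[X]) : sh 0 p = p := by
  unfold sh; simp

/-- Difference operator with step `c`. -/
def dl (c : K) (p : K[X]) : K[X] := sh c p - p

lemma dl_add (c : K) (p q : K[X]) : dl c (p + q) = dl c p + dl c q := by
  unfold dl; rw [sh_add]; ring

lemma dl_sub (c : K) (p q : K[X]) : dl c (p - q) = dl c p - dl c q := by
  unfold dl; rw [sh_sub]; ring

lemma dl_zero (c : K) : dl c 0 = 0 := by unfold dl; rw [sh_zero]; ring

lemma dl_sh (c c' : K) (p : K[X]) : dl c (sh c' p) = sh c' (dl c p) := by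
  unfold dl
  rw [sh_sub, sh_sh, sh_sh, add_comm c c']

lemma dl_C (c a : K) : dl c (C a) = 0 := by
  unfold dl; rw [sh_C]; ring

lemma dl_C_mul (c a : K) (p : K[X]) : dl c (C a * p) = C a * dl c p := by
  unfold dl; rw [sh_mul, sh_C]; ring

lemma dl_natCast_mul (c : K) (k : ℕ) (p : K[X]) :
    dl c ((k : K[X]) * p) = (k : K[X]) * dl c p := by
  unfold dl; rw [sh_mul, sh_natCast]; ring

lemma dl_iter_sh (c c' : K) (j : ℕ) (p : K[X]) :
    (dl c)^[j] (sh c' p) = sh c' ((dl c)^[j] p) := by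
  induction j generalizing p with
  | zero => simp
  | succ j ih =>
      rw [Function.iterate_succ_apply, Function.iterate_succ_apply, dl_sh, ih]

lemma dl_iter_C_mul (c a : K) (j : ℕ) (p : K[X]) :
    (dl c)^[j] (C a * p) = C a * (dl c)^[j] p := by
  induction j generalizing p with
  | zero => simp
  | succ j ih =>
      rw [Function.iterate_succ_apply, Function.iterate_succ_apply, dl_C_mul, ih]

lemma dl_iter_zero (c : K) (j : ℕ) : (dl c)^[j] (0 : K[X]) = 0 := by
  induction j with
  | zero => simp
  | succ j ih => rw [Function.iterate_succ_apply, dl_zero, ih]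

lemma dl_iter_add (c : K) (j : ℕ) (p q : K[X]) :
    (dl c)^[j] (p + q) = (dl c)^[j] p + (dl c)^[j] q := by
  induction j generalizing p q with
  | zero => simp
  | succ j ih => rw [Function.iterate_succ_apply, Function.iterate_succ_apply,
      Function.iterate_succ_apply, dl_add, ih]

/-- Falling-factorial-like polynomials for step `t` :
`ff t k = X (X - t)(X - 2t) ⋯ (X - (k-1) t)`. -/
def ff (t : K) : ℕ → K[X]
  | 0 => 1
  | (k+1) => ff t k * (X - (k : K[X]) * C t)

lemma dl_ff (t : K) (k : ℕ) :
    dl t (ff t (k+1)) = ((k : K[X]) + 1) * C t * ff t k := by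
  induction k with
  | zero =>
      have h1 : ff t 1 = 1 * (X - (0 : K[X]) * C t) := by
        show ff t 0 * _ = _
        norm_num [ff]
      rw [h1]
      unfold dl
      rw [sh_mul, sh_sub, sh_X, sh_mul, sh_C, sh_one]
      simp only [ff, Nat.cast_zero, sh_zero, zero_mul, mul_zero, sub_zero, one_mul, mul_one,
        Nat.cast_ofNat]
      ring
  | succ k ih =>
      show dl t (ff t (k+1) * (X - ((k+1 : ℕ) : K[X]) * C t)) = _
      have hsh : sh t (ff t (k+1)) = ff t (k+1) + ((k : K[X]) + 1) * C t * ff t k := by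
        have := ih
        unfold dl at this
        linear_combination this
      unfold dl
      rw [sh_mul, hsh, sh_sub, sh_X, sh_mul, sh_natCast, sh_C]
      have hff : ff t (k+1) = ff t k * (X - (k : K[X]) * C t) := rfl
      rw [hff]
      push_cast
      ring

lemma dl_iter_ff (t : K) (k : ℕ) :
    (dl t)^[k] (ff t k) = ((k.factorial : K[X])) * (C t) ^ k := by
  induction k with
  | zero => simp [ff]
  | succ k ih =>
      rw [Function.iterate_succ_apply, dl_ff]
      have : ((k : K[X]) + 1) * C t * ff t k = C ((k+1 : ℕ) * t) * ff t k := by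
        rw [map_mul, C_eq_natCast]; push_cast; ring
      rw [this, dl_iter_C_mul, ih, Nat.factorial_succ, map_mul, C_eq_natCast]
      push_cast
      ring

lemma dl_iter_ff_nonzero [CharZero K] (t : K) (ht : t ≠ 0) (k : ℕ) :
    (dl t)^[k] (ff t k) ≠ 0 := by
  rw [dl_iter_ff]
  apply mul_ne_zero
  · exact_mod_cast Nat.cast_ne_zero.mpr (Nat.factorial_ne_zero k)
  · exact pow_ne_zero _ (fun h => ht (by simpa using h))

lemma dl_iter_ff_succ_zero (t : K) (k : ℕ) :
    (dl t)^[k+1] (ff t k) = 0 := by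
  rw [Function.iterate_succ_apply', dl_iter_ff, ← map_pow, dl_natCast_mul, dl_C, mul_zero]

/-- The family of polynomials we track: scalar multiples of shifted falling factorials. -/
def Fam (t : K) : Set K[X] :=
  {p | ∃ (a : K) (k : ℕ) (c : K), p = C a * sh c (ff t k)}

lemma ff_mem_Fam (t : K) (k : ℕ) : ff t k ∈ Fam t :=
  ⟨1, k, 0, by rw [sh_zero_apply, map_one, one_mul]⟩

lemma zero_mem_Fam (t : K) : (0 : K[X]) ∈ Fam t :=
  ⟨0, 0, 0, by simp⟩

lemma Fam_sh (t c' : K) {p : K[X]} (hp : p ∈ Fam t) : sh c' p ∈ Fam t := by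
  obtain ⟨a, k, c, rfl⟩ := hp
  exact ⟨a, k, c + c', by rw [sh_mul, sh_C, sh_sh, add_comm c' c]⟩

lemma Fam_dl (t : K) {p : K[X]} (hp : p ∈ Fam t) : dl t p ∈ Fam t := by
  obtain ⟨a, k, c, rfl⟩ := hp
  cases k with
  | zero =>
      have h : dl t (C a * sh c (ff t 0)) = 0 := by
        show dl t (C a * sh c 1) = 0
        rw [sh_one, mul_one, dl_C]
      rw [h]
      exact zero_mem_Fam t
  | succ k =>
      refine ⟨a * ((k+1 : ℕ) * t), k, c, ?_⟩
      rw [dl_C_mul, dl_sh, dl_ff, sh_mul, sh_mul, sh_add, sh_natCast, sh_one, sh_C, map_mul,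
        map_mul, C_eq_natCast]
      push_cast
      ring

lemma Fam_dl_iter (t : K) (j : ℕ) {p : K[X]} (hp : p ∈ Fam t) : (dl t)^[j] p ∈ Fam t := by
  induction j with
  | zero => simpa
  | succ j ih => rw [Function.iterate_succ_apply']; exact Fam_dl t ih

/-- every member of the family is annihilated by enough difference operators. -/
lemma Fam_dl_nilpotent (t : K) {p : K[X]} (hp : p ∈ Fam t) :
    ∃ e : ℕ, (dl t)^[e] p = 0 := by
  obtain ⟨a, k, c, rfl⟩ := hp
  refine ⟨k + 1, ?_⟩
  rw [dl_iter_C_mul, dl_iter_sh, dl_iter_ff_succ_zero]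
  simp [sh_zero]

end NotLinearAux


namespace NotLinearAux2

variable {K : Type} [Field K] {n : ℕ}

variable (K)

/-- The `AlgHom` shifting generator `i0` by the constant `c`. -/
def uH (i0 : Fin n) (c : K) : FreeAlgebra K (Fin n) →ₐ[K] FreeAlgebra K (Fin n) :=
  FreeAlgebra.lift K (fun i =>
    if i = i0 then FreeAlgebra.ι K i0 + algebraMap K _ c else FreeAlgebra.ι K i)

/-- The `AlgHom` translating generator `i1` by `q(x_{i0})`. -/
def tH (i0 i1 : Fin n) (q : K[X]) : FreeAlgebra K (Fin n) →ₐ[K] FreeAlgebra K (Fin n) :=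
  FreeAlgebra.lift K (fun i =>
    if i = i1 then FreeAlgebra.ι K i1 + aeval (FreeAlgebra.ι K i0) q else FreeAlgebra.ι K i)

variable {i0 i1 : Fin n}

lemma uH_apply_ι (c : K) (i : Fin n) :
    uH K i0 c (FreeAlgebra.ι K i) =
      if i = i0 then FreeAlgebra.ι K i0 + algebraMap K _ c else FreeAlgebra.ι K i := by
  simp [uH]

lemma tH_apply_ι (q : K[X]) (i : Fin n) :
    tH K i0 i1 q (FreeAlgebra.ι K i) =
      if i = i1 then FreeAlgebra.ι K i1 + aeval (FreeAlgebra.ι K i0) q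
      else FreeAlgebra.ι K i := by
  simp [tH]

lemma tH_fix0 (hne : i0 ≠ i1) (q : K[X]) :
    tH K i0 i1 q (FreeAlgebra.ι K i0) = FreeAlgebra.ι K i0 := by
  rw [tH_apply_ι, if_neg hne]

lemma tH_aeval (hne : i0 ≠ i1) (q r : K[X]) :
    tH K i0 i1 q (aeval (FreeAlgebra.ι K i0) r) = aeval (FreeAlgebra.ι K i0) r := by
  rw [← Polynomial.aeval_algHom_apply, tH_fix0 K hne]

lemma uH_comp (c d : K) : (uH K i0 c).comp (uH K i0 d) = uH K i0 (c + d) := by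
  apply FreeAlgebra.hom_ext
  funext i
  simp only [Function.comp_apply, AlgHom.coe_comp]
  rw [uH_apply_ι, uH_apply_ι]
  by_cases h : i = i0
  · rw [if_pos h, if_pos h, map_add, uH_apply_ι, if_pos rfl, AlgHom.commutes, map_add,
      add_assoc]
  · rw [if_neg h, if_neg h, uH_apply_ι, if_neg h]

lemma uH_id : uH K (i0 := i0) 0 = AlgHom.id K _ := by
  apply FreeAlgebra.hom_ext
  funext i
  simp only [Function.comp_apply, AlgHom.coe_id, id_eq]
  rw [uH_apply_ι]
  by_cases h : i = i0
  · rw [if_pos h, map_zero, add_zero, h]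
  · rw [if_neg h]

lemma tH_comp (hne : i0 ≠ i1) (q r : K[X]) :
    (tH K i0 i1 q).comp (tH K i0 i1 r) = tH K i0 i1 (q + r) := by
  apply FreeAlgebra.hom_ext
  funext i
  simp only [Function.comp_apply, AlgHom.coe_comp]
  rw [tH_apply_ι, tH_apply_ι]
  by_cases h : i = i1
  · rw [if_pos h, if_pos h, map_add, tH_apply_ι, if_pos rfl, tH_aeval K hne, map_add,
      add_assoc]
  · rw [if_neg h, if_neg h, tH_apply_ι, if_neg h]

lemma tH_id : tH K i0 i1 (0 : K[X]) = AlgHom.id K _ := by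
  apply FreeAlgebra.hom_ext
  funext i
  simp only [Function.comp_apply, AlgHom.coe_id, id_eq]
  rw [tH_apply_ι]
  by_cases h : i = i1
  · rw [if_pos h, map_zero, add_zero, h]
  · rw [if_neg h]

/-- Shift automorphism. -/
def uA (c : K) : FreeAlgebra K (Fin n) ≃ₐ[K] FreeAlgebra K (Fin n) :=
  AlgEquiv.ofAlgHom (uH K i0 c) (uH K i0 (-c))
    (by rw [uH_comp, add_neg_cancel, uH_id]) (by rw [uH_comp, neg_add_cancel, uH_id])

/-- Translation automorphism. -/
def tA (hne : i0 ≠ i1) (q : K[X]) : FreeAlgebra K (Fin n) ≃ₐ[K] FreeAlgebra K (Fin n) :=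
  AlgEquiv.ofAlgHom (tH K i0 i1 q) (tH K i0 i1 (-q))
    (by rw [tH_comp K hne, add_neg_cancel, tH_id]) (by rw [tH_comp K hne, neg_add_cancel, tH_id])

variable (hne : i0 ≠ i1)

lemma uA_apply (c : K) (x) : uA K (i0 := i0) c x = uH K i0 c x := rfl
lemma tA_apply (q : K[X]) (x) : tA K hne q x = tH K i0 i1 q x := rfl

/-- extensionality for automorphisms of the free algebra -/
lemma autext {e f : FreeAlgebra K (Fin n) ≃ₐ[K] FreeAlgebra K (Fin n)}
    (h : ∀ i, e (FreeAlgebra.ι K i) = f (FreeAlgebra.ι K i)) : e = f := by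
  ext x
  have h2 : (e : FreeAlgebra K (Fin n) →ₐ[K] FreeAlgebra K (Fin n)) =
      (f : FreeAlgebra K (Fin n) →ₐ[K] FreeAlgebra K (Fin n)) := by
    apply FreeAlgebra.hom_ext
    funext i
    simpa using h i
  exact congrArg (fun (g : FreeAlgebra K (Fin n) →ₐ[K] FreeAlgebra K (Fin n)) => g x) h2

lemma tA_mul (q r : K[X]) : tA K hne q * tA K hne r = tA K hne (q + r) := by
  apply autext
  intro i
  show tH K i0 i1 q (tH K i0 i1 r (FreeAlgebra.ι K i)) = tH K i0 i1 (q + r) (FreeAlgebra.ι K i)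
  rw [← AlgHom.comp_apply, tH_comp K hne]

lemma tA_one : tA K hne (0 : K[X]) = 1 := by
  apply autext
  intro i
  show tH K i0 i1 0 (FreeAlgebra.ι K i) = FreeAlgebra.ι K i
  rw [tH_id]
  rfl

lemma uA_inv (c : K) : (uA K (i0 := i0) c)⁻¹ = uA K (i0 := i0) (-c) := by
  apply autext
  intro i
  rfl

/-- conjugation of a translation by the shift. -/
lemma conj_tA (q : K[X]) :
    uA K (i0 := i0) 1 * tA K hne q * (uA K (i0 := i0) 1)⁻¹ =
      tA K hne (q.comp (X + C 1)) := by
  rw [uA_inv]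
  apply autext
  intro i
  show uH K i0 1 (tH K i0 i1 q (uH K i0 (-1) (FreeAlgebra.ι K i))) =
    tH K i0 i1 (q.comp (X + C 1)) (FreeAlgebra.ι K i)
  rw [uH_apply_ι, tH_apply_ι]
  by_cases h : i = i0
  · subst h
    rw [if_pos rfl, if_neg hne]
    have e1 : tH K i i1 q (FreeAlgebra.ι K i + algebraMap K _ (-1)) =
        FreeAlgebra.ι K i + algebraMap K _ (-1) := by
      rw [map_add, tH_fix0 K hne, AlgHom.commutes]
    rw [e1, map_add, uH_apply_ι, if_pos rfl, AlgHom.commutes, add_assoc, ← map_add]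
    norm_num
  · rw [if_neg h, tH_apply_ι]
    by_cases h1 : i = i1
    · subst h1
      rw [if_pos rfl, if_pos rfl, map_add, uH_apply_ι, if_neg (Ne.symm hne)]
      congr 1
      rw [← Polynomial.aeval_algHom_apply, Polynomial.aeval_comp]
      congr 1
      rw [map_add, aeval_X, aeval_C, uH_apply_ι, if_pos rfl]
    · rw [if_neg h1, if_neg h1, uH_apply_ι, if_neg h]

lemma tA_injective (q : K[X]) (h : tA K hne q = 1) : q = 0 := by
  have h1 : tA K hne q (FreeAlgebra.ι K i1) = FreeAlgebra.ι K i1 := by rw [h]; rfl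
  rw [tA_apply, tH_apply_ι, if_pos rfl] at h1
  have h2 : aeval (FreeAlgebra.ι K i0) q = 0 := by
    have h3 := h1
    rwa [add_eq_left] at h3
  -- retraction to K[X]
  let π : FreeAlgebra K (Fin n) →ₐ[K] K[X] :=
    FreeAlgebra.lift K (fun i => if i = i0 then (X : K[X]) else 0)
  have h3 : π (aeval (FreeAlgebra.ι K i0) q) = q := by
    rw [← Polynomial.aeval_algHom_apply]
    have hx : π (FreeAlgebra.ι K i0) = X := by simp [π]
    rw [hx, aeval_X_left_apply]
  rw [h2, map_zero] at h3
  exact h3.symm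

end NotLinearAux2


namespace NotLinearAux3

variable {F : Type} [Field F]

/-- In a reduced finite-dimensional commutative algebra over a field, a nonzero polynomial
over the base field has finitely many roots. -/
lemma finite_aeval_roots (S : Type) [CommRing S] [Algebra F S]
    [FiniteDimensional F S] [IsReduced S] (p : F[X]) (hp : p ≠ 0) :
    {x : S | (aeval x) p = 0}.Finite := by
  haveI : IsArtinianRing S := IsArtinianRing.of_finite F S
  haveI : Finite {I : Ideal S | I.IsMaximal} :=
    (IsArtinianRing.setOfPred_isMaximal_finite S).to_subtype
  set g : S →+* ∀ I : {I : Ideal S | I.IsMaximal}, S ⧸ I.1 :=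
    Pi.ringHom (fun I => Ideal.Quotient.mk I.1) with hgdef
  have hginj : Function.Injective g := by
    rw [injective_iff_map_eq_zero]
    intro a ha
    have h1 : a ∈ nilradical S := by
      rw [nilradical_eq_sInf, Submodule.mem_sInf]
      intro J hJ
      have hJm : Ideal.IsMaximal J := (IsArtinianRing.isPrime_iff_isMaximal J).mp hJ
      have h2 := congrFun ha ⟨J, hJm⟩
      have h3 : Ideal.Quotient.mk J a = 0 := h2
      exact (Ideal.Quotient.eq_zero_iff_mem).mp h3
    rw [nilradical_eq_zero S] at h1
    simpa using h1
  set T : ∀ I : {I : Ideal S | I.IsMaximal}, Set (S ⧸ I.1) :=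
    fun I => {y : S ⧸ I.1 | ((p.map ((Ideal.Quotient.mk I.1).comp (algebraMap F S)))).IsRoot y}
    with hTdef
  have hTfin : ∀ I, (T I).Finite := by
    intro I
    letI : Field (S ⧸ I.1) := @Ideal.Quotient.field S _ I.1 I.2
    apply Polynomial.finite_setOf_isRoot
    rw [Ne, Polynomial.map_eq_zero_iff]
    · exact hp
    · exact ((Ideal.Quotient.mk I.1).comp (algebraMap F S)).injective
  have hsub : {x : S | (aeval x) p = 0} ⊆ g ⁻¹' (Set.pi Set.univ T) := by
    intro x hx
    intro I _
    show ((p.map ((Ideal.Quotient.mk I.1).comp (algebraMap F S)))).IsRoot (g x I)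
    have h4 : g x I = Ideal.Quotient.mk I.1 x := rfl
    rw [IsRoot, eval_map, h4, ← Polynomial.hom_eval₂, ← aeval_def, hx, map_zero]
  exact Set.Finite.subset (Set.Finite.preimage hginj.injOn (Set.Finite.pi hTfin)) hsub

/-- Every algebra automorphism of a reduced finite-dimensional commutative algebra over a
field has finite order. -/
lemma exists_pow_eq_id (S : Type) [CommRing S] [Algebra F S]
    [FiniteDimensional F S] [IsReduced S] (φ : S ≃ₐ[F] S) :
    ∃ Q : ℕ, 0 < Q ∧ ∀ x : S, (φ ^ Q) x = x := by
  classical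
  haveI : Algebra.IsIntegral F S := Algebra.IsIntegral.of_finite F S
  set b := Module.finBasis F S with hb
  set Z : Set S := ⋃ i, {x : S | (aeval x) (minpoly F (b i)) = 0} with hZ
  have hZfin : Z.Finite := by
    apply Set.finite_iUnion
    intro i
    exact finite_aeval_roots S _ (minpoly.ne_zero (Algebra.IsIntegral.isIntegral (b i)))
  have hbZ : ∀ i, b i ∈ Z := by
    intro i
    exact Set.mem_iUnion.mpr ⟨i, by simp [minpoly.aeval]⟩
  have hmaps : ∀ (ψ : S ≃ₐ[F] S), Set.MapsTo ψ Z Z := by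
    intro ψ x hx
    rcases Set.mem_iUnion.mp hx with ⟨i, hi⟩
    apply Set.mem_iUnion.mpr ⟨i, ?_⟩
    show (aeval (ψ x)) (minpoly F (b i)) = 0
    rw [Polynomial.aeval_algHom_apply]
    · rw [show (aeval x) (minpoly F (b i)) = 0 from hi, map_zero]
  haveI : Finite ↥Z := hZfin.to_subtype
  set e : ↥Z → ↥Z := (hmaps φ).restrict with he
  have einj : Function.Injective e := by
    intro a b h
    exact Subtype.ext (φ.injective (congrArg Subtype.val h))
  have ebij : Function.Bijective e := (Finite.injective_iff_bijective).mp einj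
  set perm : Equiv.Perm ↥Z := Equiv.ofBijective e ebij with hperm
  haveI : Finite (Equiv.Perm ↥Z) := by infer_instance
  refine ⟨orderOf perm, orderOf_pos perm, ?_⟩
  -- iterates agree
  have hiter : ∀ (k : ℕ) (z : ↥Z), ((perm ^ k) z : S) = (φ ^ k) (z : S) := by
    intro k
    induction k with
    | zero => intro z; simp
    | succ k ih =>
        intro z
        rw [pow_succ, pow_succ]
        have h5 : ((perm ^ k * perm) z : S) = ((perm ^ k) (perm z) : S) := by
          rw [Equiv.Perm.mul_apply]
        rw [h5, ih]
        have h6 : ((perm z : S)) = φ (z : S) := rfl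
        rw [h6]
        rfl
  have hfixZ : ∀ z ∈ Z, (φ ^ orderOf perm) z = z := by
    intro z hz
    have h7 := hiter (orderOf perm) ⟨z, hz⟩
    rw [pow_orderOf_eq_one perm] at h7
    simpa using h7.symm
  -- extend to all of S by linearity
  intro x
  have hxtop : x ∈ (⊤ : Submodule F S) := Submodule.mem_top
  have hspan : Submodule.span F Z = ⊤ := by
    apply top_unique
    rw [← b.span_eq]
    apply Submodule.span_mono
    rintro _ ⟨i, rfl⟩
    exact hbZ i
  rw [← hspan] at hxtop
  refine Submodule.span_induction ?_ ?_ ?_ ?_ hxtop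
  · intro y hy; exact hfixZ y hy
  · exact map_zero _
  · intro y z _ _ hy hz
    rw [map_add, hy, hz]
  · intro a y _ hy
    rw [map_smul, hy]

end NotLinearAux3

namespace NotLinearAux

variable {K : Type} [Field K]

section Core

variable [CharZero K] {F : Type} [Field F]

theorem core (A : Type) [CommRing A] [Algebra F A] [FiniteDimensional F A]
    (W : K[X] → Aˣ)
    (hadd : ∀ p q : K[X], W (p + q) = W p * W q)
    (φ : A ≃ₐ[F] A)
    (hφ : ∀ q : K[X], φ ((W q : A)) = ((W (sh (1:K) q) : A)))
    (hinj : ∀ q : K[X], W q = 1 → q = 0) : False := by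
  classical
  -- basic facts about W
  have hW0 : W 0 = 1 := by
    have h := hadd 0 0
    rw [add_zero] at h
    exact (left_eq_mul.mp h)
  -- iterated conjugation
  have hφpow : ∀ (k : ℕ) (q : K[X]), ((φ ^ k) ((W q : A))) = (W (sh (k : K) q) : A) := by
    intro k
    induction k with
    | zero =>
        intro q
        rw [pow_zero]
        rw [Nat.cast_zero, sh_zero_apply]
        rfl
    | succ k ih =>
        intro q
        rw [pow_succ', AlgEquiv.mul_apply, ih, hφ, sh_sh]
        congr 2
        push_cast
        ring
  -- the nilradical and its nilpotence
  haveI : IsNoetherianRing A := isNoetherian_of_tower F inferInstance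
  obtain ⟨s, hs⟩ := IsNoetherianRing.isNilpotent_nilradical A
  set N : Ideal A := nilradical A with hN
  -- quotient by the nilradical
  haveI hred : IsReduced (A ⧸ N) := by
    rw [← Ideal.isRadical_iff_quotient_reduced]
    exact Ideal.radical_isRadical 0
  haveI : FiniteDimensional F (A ⧸ N) :=
    FiniteDimensional.of_surjective (Ideal.Quotient.mkₐ F N).toLinearMap
      (Ideal.Quotient.mkₐ_surjective F N)
  set ψ : A →ₐ[F] A ⧸ N := Ideal.Quotient.mkₐ F N with hψ
  have hψker : ∀ x : A, ψ x = 0 ↔ x ∈ N := fun x => Ideal.Quotient.eq_zero_iff_mem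
  -- the induced automorphism of the quotient
  have hφN : ∀ (e : A ≃ₐ[F] A) (a : A), a ∈ N → e a ∈ N := by
    intro e a ha
    rw [hN, mem_nilradical] at *
    exact IsNilpotent.map ha (e : A →+* A)
  set f1 : A ⧸ N →ₐ[F] A ⧸ N :=
    Ideal.Quotient.liftₐ N (ψ.comp φ.toAlgHom)
      (fun a ha => by
        show ψ (φ a) = 0
        rw [hψker]
        exact hφN φ a ha) with hf1
  set f2 : A ⧸ N →ₐ[F] A ⧸ N :=
    Ideal.Quotient.liftₐ N (ψ.comp φ.symm.toAlgHom)
      (fun a ha => by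
        show ψ (φ.symm a) = 0
        rw [hψker]
        exact hφN φ.symm a ha) with hf2
  have hf1mk : ∀ x : A, f1 (ψ x) = ψ (φ x) := fun x =>
    Ideal.Quotient.liftₐ_apply N (ψ.comp φ.toAlgHom) _ (Ideal.Quotient.mk N x)
  have hf2mk : ∀ x : A, f2 (ψ x) = ψ (φ.symm x) := fun x =>
    Ideal.Quotient.liftₐ_apply N (ψ.comp φ.symm.toAlgHom) _ (Ideal.Quotient.mk N x)
  set φS : (A ⧸ N) ≃ₐ[F] (A ⧸ N) := AlgEquiv.ofAlgHom f1 f2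
    (by
      apply AlgHom.ext
      intro y
      obtain ⟨x, rfl⟩ := Ideal.Quotient.mkₐ_surjective F N y
      show f1 (f2 (ψ x)) = ψ x
      rw [hf2mk, hf1mk, AlgEquiv.apply_symm_apply])
    (by
      apply AlgHom.ext
      intro y
      obtain ⟨x, rfl⟩ := Ideal.Quotient.mkₐ_surjective F N y
      show f2 (f1 (ψ x)) = ψ x
      rw [hf1mk, hf2mk, AlgEquiv.symm_apply_apply]) with hφS
  have hφSmk : ∀ x : A, φS (ψ x) = ψ (φ x) := hf1mk
  -- finite order of φS
  obtain ⟨Q, hQpos, hQid⟩ := NotLinearAux3.exists_pow_eq_id (A ⧸ N) φS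
  have hφSpow : ∀ (k : ℕ) (x : A), (φS ^ k) (ψ x) = ψ ((φ ^ k) x) := by
    intro k
    induction k with
    | zero => intro x; rw [pow_zero, pow_zero]; rfl
    | succ k ih =>
        intro x
        rw [pow_succ', pow_succ', AlgEquiv.mul_apply, AlgEquiv.mul_apply, ih, hφSmk]
  -- the step-Q difference operator
  set t : K := (Q : K) with htdef
  have ht : t ≠ 0 := by
    rw [htdef]
    exact (Nat.cast_ne_zero (R := K)).mpr hQpos.ne'
  have hWsh : ∀ q : K[X], (W (sh t q) : A) = (φ ^ Q) ((W q : A)) := by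
    intro q
    rw [hφpow Q q]
  have hbase : ∀ q : K[X], ((W (dl t q) : A)) - 1 ∈ N := by
    intro q
    have h1 : ψ ((φ ^ Q) ((W q : A))) = ψ ((W q : A)) := by
      rw [← hφSpow, hQid]
    have h2 : (φ ^ Q) ((W q : A)) - (W q : A) ∈ N := by
      have h2a : ψ ((φ ^ Q) ((W q : A)) - (W q : A)) = 0 := by
        rw [map_sub, h1, sub_self]
      rwa [hψker] at h2a
    rw [← hWsh] at h2
    have h3 : W (dl t q) = W (sh t q) * (W q)⁻¹ := by
      have h4 := hadd (dl t q) q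
      rw [show dl t q + q = sh t q by rw [dl]; ring] at h4
      rw [h4, mul_inv_cancel_right]
    have h5 : ((W (dl t q) : A)) - 1 = ((W (sh t q) : A) - (W q : A)) * ((W q)⁻¹ : Aˣ) := by
      rw [h3, Units.val_mul, sub_mul]
      congr 1
      exact (Units.mul_inv (W q)).symm
    rw [h5]
    exact Ideal.mul_mem_right _ _ h2
  -- conjugation preserves powers of the nilradical
  set χ : A ≃ₐ[F] A := φ ^ Q with hχ
  have hmapN : Ideal.map (χ : A →+* A) N = N := by
    apply le_antisymm
    · rw [Ideal.map_le_iff_le_comap]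
      intro a ha
      exact hφN χ a ha
    · intro a ha
      have h6 : a = χ (χ.symm a) := (AlgEquiv.apply_symm_apply χ a).symm
      rw [h6]
      exact Ideal.mem_map_of_mem _ (hφN χ.symm a ha)
  have hχmem : ∀ (j : ℕ) (x : A), x ∈ N ^ j → χ x ∈ N ^ j := by
    intro j x hx
    have h7 : χ x ∈ Ideal.map (χ : A →+* A) (N ^ j) := Ideal.mem_map_of_mem _ hx
    rwa [Ideal.map_pow, hmapN] at h7
  have hχW : ∀ q : K[X], χ ((W q : A)) = (W (sh t q) : A) := fun q => (hWsh q).symm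
  -- the main induction on powers of the nilradical
  have main : ∀ i : ℕ, ∃ c : ℕ, ∀ p ∈ Fam t, ((W ((dl t)^[c] p) : A)) - 1 ∈ N ^ (i + 1) := by
    intro i
    induction i with
    | zero =>
        refine ⟨1, fun p _ => ?_⟩
        rw [pow_one, Function.iterate_one]
        exact hbase p
    | succ i ih =>
        obtain ⟨c, hc⟩ := ih
        set V1 : Submodule F A := Submodule.restrictScalars F (N ^ (i + 1)) with hV1
        set V2 : Submodule F A := Submodule.restrictScalars F (N ^ (i + 2)) with hV2
        set V2' : Submodule F ↥V1 := V2.comap V1.subtype with hV2'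
        have hrestrict : ∀ x ∈ V1, χ.toLinearMap x ∈ V1 := by
          intro x hx
          exact hχmem (i+1) x hx
        set fV : ↥V1 →ₗ[F] ↥V1 := (χ.toLinearMap).restrict hrestrict with hfV
        have hmapsQ : V2' ≤ V2'.comap fV := by
          intro x hx
          show (fV x : A) ∈ V2
          have h8 : (fV x : A) = χ (x : A) := rfl
          rw [h8]
          exact hχmem (i+2) _ hx
        set Lm : (↥V1 ⧸ V2') →ₗ[F] (↥V1 ⧸ V2') := Submodule.mapQ V2' V2' fV hmapsQ with hLm
        set g : Module.End F (↥V1 ⧸ V2') := Lm - LinearMap.id with hg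
        -- helper lemmas about the quotient
        have hmkdiff : ∀ (x y : ↥V1), (x : A) - (y : A) ∈ V2 → V2'.mkQ x = V2'.mkQ y := by
          intro x y hxy
          rw [Submodule.mkQ_apply, Submodule.mkQ_apply, Submodule.Quotient.eq]
          apply Submodule.mem_comap.mpr
          simpa using hxy
        have hmk0 : ∀ x : ↥V1, V2'.mkQ x = 0 → (x : A) ∈ V2 := by
          intro x hx
          rw [Submodule.mkQ_apply, Submodule.Quotient.mk_eq_zero] at hx
          simpa using Submodule.mem_comap.mp hx
        have hmem : ∀ p ∈ Fam t, ((W ((dl t)^[c] p) : A)) - 1 ∈ V1 := fun p hp => hc p hp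
        set ξ : ∀ p, p ∈ Fam t → (↥V1 ⧸ V2') :=
          fun p hp => V2'.mkQ ⟨((W ((dl t)^[c] p) : A)) - 1, hmem p hp⟩ with hξ
        have hxi_congr : ∀ p q (hp : p ∈ Fam t) (hq : q ∈ Fam t), p = q → ξ p hp = ξ q hq := by
          intro p q hp hq h
          subst h
          rfl
        have fa : ∀ p (hp : p ∈ Fam t), Lm (ξ p hp) = ξ (sh t p) (Fam_sh t t hp) := by
          intro p hp
          show Lm (V2'.mkQ _) = V2'.mkQ _
          rw [hLm, Submodule.mkQ_apply, Submodule.mapQ_apply, Submodule.mkQ_apply]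
          congr 1
          apply Subtype.ext
          show χ (((W ((dl t)^[c] p) : A)) - 1) = ((W ((dl t)^[c] (sh t p)) : A)) - 1
          rw [map_sub, map_one, hχW, ← dl_iter_sh]
        have fb : ∀ p (hp : p ∈ Fam t),
            ξ (sh t p) (Fam_sh t t hp) - ξ p hp = ξ (dl t p) (Fam_dl t hp) := by
          intro p hp
          have hpoly : (dl t)^[c] (sh t p) = (dl t)^[c] p + (dl t)^[c] (dl t p) := by
            rw [← dl_iter_add]
            congr 1
            rw [dl]
            ring
          have hWa : ((W ((dl t)^[c] (sh t p)) : A)) =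
              ((W ((dl t)^[c] p) : A)) * ((W ((dl t)^[c] (dl t p)) : A)) := by
            rw [hpoly, hadd, Units.val_mul]
          show V2'.mkQ _ - V2'.mkQ _ = V2'.mkQ _
          rw [← map_sub]
          apply hmkdiff
          have hcoe : ((((⟨((W ((dl t)^[c] (sh t p)) : A)) - 1, hmem _ (Fam_sh t t hp)⟩ : ↥V1) -
              (⟨((W ((dl t)^[c] p) : A)) - 1, hmem p hp⟩ : ↥V1)) : ↥V1) : A) -
              ((⟨((W ((dl t)^[c] (dl t p)) : A)) - 1, hmem _ (Fam_dl t hp)⟩ : ↥V1) : A) =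
              (((W ((dl t)^[c] p) : A)) - 1) * (((W ((dl t)^[c] (dl t p)) : A)) - 1) := by
            push_cast
            linear_combination hWa
          rw [hcoe]
          have h10 := Ideal.mul_mem_mul (hc p hp) (hc (dl t p) (Fam_dl t hp))
          rw [← pow_add] at h10
          have h11 : (N ^ (i + 1 + (i + 1)) : Ideal A) ≤ N ^ (i + 2) :=
            Ideal.pow_le_pow_right (by omega)
          show _ ∈ Submodule.restrictScalars F (N ^ (i + 2))
          rw [Submodule.restrictScalars_mem]
          exact h11 h10
        have fc : ∀ (j : ℕ) p (hp : p ∈ Fam t),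
            (g ^ j) (ξ p hp) = ξ ((dl t)^[j] p) (Fam_dl_iter t j hp) := by
          intro j
          induction j with
          | zero =>
              intro p hp
              rw [pow_zero, Module.End.one_apply]
              exact hxi_congr p _ hp (Fam_dl_iter t 0 hp)
                (Function.iterate_zero_apply (dl t) p).symm
          | succ j ih2 =>
              intro p hp
              have h9 : g (ξ p hp) = ξ (dl t p) (Fam_dl t hp) := by
                rw [hg, LinearMap.sub_apply, LinearMap.id_apply, fa p hp]
                exact fb p hp
              rw [pow_succ, Module.End.mul_apply, h9, ih2 (dl t p) (Fam_dl t hp)]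
              exact hxi_congr _ _ (Fam_dl_iter t j (Fam_dl t hp)) (Fam_dl_iter t (j+1) hp)
                (Function.iterate_succ_apply (dl t) j p).symm
        refine ⟨c + Module.finrank F (↥V1 ⧸ V2'), ?_⟩
        intro p hp
        set w := Module.finrank F (↥V1 ⧸ V2') with hw
        obtain ⟨a, k, c0, hpeq⟩ := hp
        have hp' : p ∈ Fam t := ⟨a, k, c0, hpeq⟩
        have hz : (dl t)^[k+1] p = 0 := by
          rw [hpeq, dl_iter_C_mul, dl_iter_sh, dl_iter_ff_succ_zero]
          simp [sh_zero]
        have hann : (g ^ (k+1)) (ξ p hp') = 0 := by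
          rw [fc (k+1) p hp', hxi_congr ((dl t)^[k+1] p) 0 (Fam_dl_iter t (k+1) hp') (zero_mem_Fam t) hz]
          show V2'.mkQ _ = 0
          have hzel : (⟨((W ((dl t)^[c] (0:K[X])) : A)) - 1, hmem 0 (zero_mem_Fam t)⟩ : ↥V1) =
              0 := by
            apply Subtype.ext
            show ((W ((dl t)^[c] (0:K[X])) : A)) - 1 = 0
            rw [dl_iter_zero, hW0, Units.val_one, sub_self]
          rw [hzel, map_zero]
        have hker : ξ p hp' ∈ LinearMap.ker (g ^ (k+1)) := hann
        have hker2 : ξ p hp' ∈ LinearMap.ker (g ^ w) :=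
          Module.End.ker_pow_le_ker_pow_finrank g (k+1) hker
        have hzero : ξ ((dl t)^[w] p) (Fam_dl_iter t w hp') = 0 := by
          rw [← fc w p hp']
          exact hker2
        have hfin : ((W ((dl t)^[c] ((dl t)^[w] p)) : A)) - 1 ∈ V2 :=
          hmk0 _ hzero
        rw [← Function.iterate_add_apply] at hfin
        rw [hV2, Submodule.restrictScalars_mem] at hfin
        exact hfin
  -- conclusion
  obtain ⟨c, hc⟩ := main s
  have hbot : (N : Ideal A) ^ (s + 1) = ⊥ := by
    apply le_antisymm _ bot_le
    calc (N : Ideal A) ^ (s+1) ≤ N ^ s := Ideal.pow_le_pow_right (by omega)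
    _ = ⊥ := hs
  have hp := hc (ff t c) (ff_mem_Fam t c)
  rw [hbot, Submodule.mem_bot, sub_eq_zero] at hp
  have hu : W ((dl t)^[c] (ff t c)) = 1 := Units.ext hp
  exact dl_iter_ff_nonzero t ht c (hinj _ hu)

end Core

end NotLinearAux


noncomputable section
open Polynomial NotLinearAux NotLinearAux2

theorem Aut_free_algebra_not_linear (K : Type) [Field K] [CharZero K]
    (n : ℕ) (hn : 2 ≤ n) (F : Type) [Field F] (m : ℕ)
    (ρ : (FreeAlgebra K (Fin n) ≃ₐ[K] FreeAlgebra K (Fin n)) →*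
          Matrix.GeneralLinearGroup (Fin m) F) :
    ¬ Function.Injective ρ := by
  intro hρ
  classical
  set i0 : Fin n := ⟨0, by omega⟩ with hi0
  set i1 : Fin n := ⟨1, by omega⟩ with hi1
  have hne : i0 ≠ i1 := by
    simp [hi0, hi1, Fin.ext_iff]
  set Mx := Matrix (Fin m) (Fin m) F with hMx
  set 𝒲 : K[X] → Mxˣ := fun q => ρ (tA K hne q) with h𝒲
  set U : Mxˣ := ρ (uA K (i0 := i0) 1) with hU
  -- basic facts
  have Wadd : ∀ p q : K[X], 𝒲 (p + q) = 𝒲 p * 𝒲 q := by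
    intro p q
    rw [h𝒲]
    show ρ (tA K hne (p + q)) = ρ (tA K hne p) * ρ (tA K hne q)
    rw [← map_mul, tA_mul]
  have W0 : 𝒲 0 = 1 := by
    rw [h𝒲]
    show ρ (tA K hne 0) = 1
    rw [tA_one, map_one]
  have hWinj : ∀ q : K[X], 𝒲 q = 1 → q = 0 := by
    intro q h
    apply tA_injective K hne
    apply hρ
    rw [map_one]
    exact h
  have hconj : ∀ q : K[X], U * 𝒲 q * U⁻¹ = 𝒲 (sh (1 : K) q) := by
    intro q
    rw [hU, h𝒲]
    show ρ (uA K 1) * ρ (tA K hne q) * (ρ (uA K 1))⁻¹ = ρ (tA K hne (sh (1:K) q))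
    rw [← map_inv, ← map_mul, ← map_mul, conj_tA]
    rfl
  have hconjinv : ∀ q : K[X], U⁻¹ * 𝒲 q * U = 𝒲 (sh (-1 : K) q) := by
    intro q
    have h := hconj (sh (-1 : K) q)
    rw [sh_sh] at h
    norm_num at h
    rw [sh_zero_apply] at h
    rw [← h]
    group
  -- the commutative matrix subalgebra
  have hWmulval : ∀ p q : K[X],
      ((𝒲 p : Mxˣ) : Mx) * ((𝒲 q : Mxˣ) : Mx) = ((𝒲 (p+q) : Mxˣ) : Mx) := by
    intro p q
    rw [Wadd]
    rfl
  set Λ : Set Mx := Set.range (fun q : K[X] => ((𝒲 q : Mxˣ) : Mx)) with hΛ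
  have hcomm : ∀ a ∈ Λ, ∀ b ∈ Λ, a * b = b * a := by
    rintro _ ⟨p, rfl⟩ _ ⟨q, rfl⟩
    show ((𝒲 p : Mxˣ) : Mx) * ((𝒲 q : Mxˣ) : Mx) = ((𝒲 q : Mxˣ) : Mx) * ((𝒲 p : Mxˣ) : Mx)
    rw [hWmulval, hWmulval, add_comm]
  set A : Subalgebra F Mx := Algebra.adjoin F Λ with hA
  letI : CommRing ↥A := Algebra.adjoinCommRingOfComm F hcomm
  haveI : FiniteDimensional F ↥A :=
    FiniteDimensional.of_injective (Subalgebra.val A).toLinearMap Subtype.val_injective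
  have memA : ∀ q : K[X], ((𝒲 q : Mxˣ) : Mx) ∈ A := fun q =>
    Algebra.subset_adjoin ⟨q, rfl⟩
  -- units of A
  set WA : K[X] → (↥A)ˣ := fun q =>
    { val := ⟨((𝒲 q : Mxˣ) : Mx), memA q⟩
      inv := ⟨((𝒲 (-q) : Mxˣ) : Mx), memA (-q)⟩
      val_inv := by
        apply Subtype.ext
        show ((𝒲 q : Mxˣ) : Mx) * ((𝒲 (-q) : Mxˣ) : Mx) = 1
        rw [hWmulval, add_neg_cancel, W0]
        rfl
      inv_val := by
        apply Subtype.ext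
        show ((𝒲 (-q) : Mxˣ) : Mx) * ((𝒲 q : Mxˣ) : Mx) = 1
        rw [hWmulval, neg_add_cancel, W0]
        rfl } with hWA
  have hWAadd : ∀ p q : K[X], WA (p + q) = WA p * WA q := by
    intro p q
    apply Units.ext
    apply Subtype.ext
    show ((𝒲 (p+q) : Mxˣ) : Mx) = ((𝒲 p : Mxˣ) : Mx) * ((𝒲 q : Mxˣ) : Mx)
    rw [hWmulval]
  have hWAinj : ∀ q : K[X], WA q = 1 → q = 0 := by
    intro q h
    apply hWinj
    apply Units.ext
    exact congrArg (fun u : (↥A)ˣ => (((u : ↥A) : Mx))) h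
  -- conjugation as an algebra automorphism of A
  have hconjM : ∀ q : K[X], (U : Mx) * ((𝒲 q : Mxˣ) : Mx) * ((U⁻¹ : Mxˣ) : Mx) =
      ((𝒲 (sh (1:K) q) : Mxˣ) : Mx) := by
    intro q
    exact_mod_cast congrArg Units.val (hconj q)
  have hconjMinv : ∀ q : K[X], ((U⁻¹ : Mxˣ) : Mx) * ((𝒲 q : Mxˣ) : Mx) * (U : Mx) =
      ((𝒲 (sh (-1:K) q) : Mxˣ) : Mx) := by
    intro q
    exact_mod_cast congrArg Units.val (hconjinv q)
  have hUA : ∀ x ∈ A, (U : Mx) * x * ((U⁻¹ : Mxˣ) : Mx) ∈ A := by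
    intro x hx
    induction hx using Algebra.adjoin_induction with
    | mem y hy =>
        obtain ⟨q, rfl⟩ := hy
        rw [hconjM]
        exact memA _
    | algebraMap r =>
        have h2 : (U : Mx) * algebraMap F Mx r * ((U⁻¹ : Mxˣ) : Mx) = algebraMap F Mx r := by
          rw [← Algebra.commutes r (U : Mx), mul_assoc, Units.mul_inv, mul_one]
        rw [h2]
        exact Subalgebra.algebraMap_mem A r
    | add y z hy hz ihy ihz =>
        have h3 : (U : Mx) * (y + z) * ((U⁻¹ : Mxˣ) : Mx) =
            (U : Mx) * y * ((U⁻¹ : Mxˣ) : Mx) + (U : Mx) * z * ((U⁻¹ : Mxˣ) : Mx) := by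
          noncomm_ring
        rw [h3]
        exact add_mem ihy ihz
    | mul y z hy hz ihy ihz =>
        have h4 : (U : Mx) * (y * z) * ((U⁻¹ : Mxˣ) : Mx) =
            ((U : Mx) * y * ((U⁻¹ : Mxˣ) : Mx)) * ((U : Mx) * z * ((U⁻¹ : Mxˣ) : Mx)) := by
          have h5 : ((U⁻¹ : Mxˣ) : Mx) * (U : Mx) = 1 := U.inv_mul
          calc (U : Mx) * (y * z) * ((U⁻¹ : Mxˣ) : Mx)
              = (U : Mx) * y * (((U⁻¹ : Mxˣ) : Mx) * (U : Mx)) * z * ((U⁻¹ : Mxˣ) : Mx) := by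
                rw [h5, mul_one]
                noncomm_ring
            _ = ((U : Mx) * y * ((U⁻¹ : Mxˣ) : Mx)) * ((U : Mx) * z * ((U⁻¹ : Mxˣ) : Mx)) := by
                noncomm_ring
        rw [h4]
        exact mul_mem ihy ihz
  have hUAinv : ∀ x ∈ A, ((U⁻¹ : Mxˣ) : Mx) * x * (U : Mx) ∈ A := by
    intro x hx
    induction hx using Algebra.adjoin_induction with
    | mem y hy =>
        obtain ⟨q, rfl⟩ := hy
        rw [hconjMinv]
        exact memA _
    | algebraMap r =>
        have h2 : ((U⁻¹ : Mxˣ) : Mx) * algebraMap F Mx r * (U : Mx) = algebraMap F Mx r := by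
          rw [← Algebra.commutes r ((U⁻¹ : Mxˣ) : Mx), mul_assoc, Units.inv_mul, mul_one]
        rw [h2]
        exact Subalgebra.algebraMap_mem A r
    | add y z hy hz ihy ihz =>
        have h3 : ((U⁻¹ : Mxˣ) : Mx) * (y + z) * (U : Mx) =
            ((U⁻¹ : Mxˣ) : Mx) * y * (U : Mx) + ((U⁻¹ : Mxˣ) : Mx) * z * (U : Mx) := by
          noncomm_ring
        rw [h3]
        exact add_mem ihy ihz
    | mul y z hy hz ihy ihz =>
        have h5 : (U : Mx) * ((U⁻¹ : Mxˣ) : Mx) = 1 := U.mul_inv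
        have h4 : ((U⁻¹ : Mxˣ) : Mx) * (y * z) * (U : Mx) =
            (((U⁻¹ : Mxˣ) : Mx) * y * (U : Mx)) * (((U⁻¹ : Mxˣ) : Mx) * z * (U : Mx)) := by
          calc ((U⁻¹ : Mxˣ) : Mx) * (y * z) * (U : Mx)
              = ((U⁻¹ : Mxˣ) : Mx) * y * ((U : Mx) * ((U⁻¹ : Mxˣ) : Mx)) * z * (U : Mx) := by
                rw [h5, mul_one]
                noncomm_ring
            _ = (((U⁻¹ : Mxˣ) : Mx) * y * (U : Mx)) * (((U⁻¹ : Mxˣ) : Mx) * z * (U : Mx)) := by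
                noncomm_ring
        rw [h4]
        exact mul_mem ihy ihz
  set φA : ↥A ≃ₐ[F] ↥A :=
    { toFun := fun x => ⟨(U : Mx) * (x : Mx) * ((U⁻¹ : Mxˣ) : Mx), hUA (x : Mx) x.2⟩
      invFun := fun x => ⟨((U⁻¹ : Mxˣ) : Mx) * (x : Mx) * (U : Mx), hUAinv (x : Mx) x.2⟩
      left_inv := by
        intro x
        apply Subtype.ext
        show ((U⁻¹ : Mxˣ) : Mx) * ((U : Mx) * (x : Mx) * ((U⁻¹ : Mxˣ) : Mx)) * (U : Mx) = (x : Mx)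
        simp [mul_assoc, Units.inv_mul_cancel_left, Units.mul_inv_cancel_right,
          Units.inv_mul_cancel_right, Units.mul_inv_cancel_left]
      right_inv := by
        intro x
        apply Subtype.ext
        show (U : Mx) * (((U⁻¹ : Mxˣ) : Mx) * (x : Mx) * (U : Mx)) * ((U⁻¹ : Mxˣ) : Mx) = (x : Mx)
        simp [mul_assoc, Units.inv_mul_cancel_left, Units.mul_inv_cancel_right,
          Units.inv_mul_cancel_right, Units.mul_inv_cancel_left]
      map_mul' := by
        intro x y
        apply Subtype.ext
        show (U : Mx) * ((x : Mx) * (y : Mx)) * ((U⁻¹ : Mxˣ) : Mx) =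
          ((U : Mx) * (x : Mx) * ((U⁻¹ : Mxˣ) : Mx)) * ((U : Mx) * (y : Mx) * ((U⁻¹ : Mxˣ) : Mx))
        simp [mul_assoc, Units.inv_mul_cancel_left]
      map_add' := by
        intro x y
        apply Subtype.ext
        show (U : Mx) * ((x : Mx) + (y : Mx)) * ((U⁻¹ : Mxˣ) : Mx) =
          (U : Mx) * (x : Mx) * ((U⁻¹ : Mxˣ) : Mx) + (U : Mx) * (y : Mx) * ((U⁻¹ : Mxˣ) : Mx)
        noncomm_ring
      commutes' := by
        intro r
        apply Subtype.ext
        show (U : Mx) * (algebraMap F Mx r) * ((U⁻¹ : Mxˣ) : Mx) = algebraMap F Mx r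
        rw [← Algebra.commutes r (U : Mx), mul_assoc, Units.mul_inv, mul_one] } with hφA
  have hφAW : ∀ q : K[X], φA ((WA q : ↥A)) = ((WA (sh (1:K) q) : ↥A)) := by
    intro q
    apply Subtype.ext
    show (U : Mx) * ((𝒲 q : Mxˣ) : Mx) * ((U⁻¹ : Mxˣ) : Mx) = ((𝒲 (sh (1:K) q) : Mxˣ) : Mx)
    exact hconjM q
  exact NotLinearAux.core (K := K) (F := F) ↥A WA hWAadd φA hφAW hWAinj
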